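/- Let k be a field of characteristic zero, R = k[x_0,x_1,x_2,x_3], F = x_0^4 + (x_1^2 + x_2^2)^2, so u = (∂F/∂x_i) = (4x_0^3, 4x_1(x_1^2+x_2^2), 4x_2(x_1^2+x_2^2), 0). Then the kernel of the Koszul differential ∂_u : R^6_2 → R^4_5 (on degree-2 coefficient tuples indexed by pairs {i,j}) equals { (0,0,0,0, x_2 u, -x_1 u) : u ∈ R_1 }, a 4-dimensional space. -/

import Mathlib

/-!
STATEMENT 17. Let `k` be a field of characteristic zero,
`R = k[x_0,x_1,x_2,x_3]`, `F = x_0^4 + (x_1^2 + x_2^2)^2`, so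
`u = ∇F = (4x_0^3, 4x_1(x_1^2+x_2^2), 4x_2(x_1^2+x_2^2), 0)`.  Then the
kernel of the Koszul differential `∂_u : R^6_2 → R^4_5` (coordinates indexed
by the pairs `(01),(02),(03),(12),(13),(23)`) equals
`{ (0,0,0,0, x_2 w, -x_1 w) : w ∈ R_1 }`, a `4`-dimensional space.
-/

open MvPolynomial Module

section StmtAux

variable {k : Type*} [Field k]

private lemma stmt17_primeX (i : Fin 4) : Prime (X i : MvPolynomial (Fin 4) k) := by
  let e := (renameEquiv k (Equiv.swap i 0)).trans (finSuccEquiv k 3)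
  have h : e (X i) = Polynomial.X := by
    simp [e, renameEquiv_apply, Equiv.swap_apply_left, finSuccEquiv_X_zero]
  rw [← MulEquiv.prime_iff e.toMulEquiv]
  rw [show e.toMulEquiv (X i) = e (X i) from rfl, h]
  exact Polynomial.prime_X

private lemma stmt17_degree4 (d : Fin 4 →₀ ℕ) : d.degree = d 0 + d 1 + d 2 + d 3 := by
  rw [Finsupp.degree_apply, Finset.sum_subset (Finset.subset_univ _)
    (fun i _ hi => Finsupp.notMem_support_iff.1 hi), Fin.sum_univ_four]

private lemma stmt17_isHomog_of (p : MvPolynomial (Fin 4) k) (n : ℕ)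
    (h : ∀ d, coeff d p ≠ 0 → Finsupp.degree d = n) : p.IsHomogeneous n := by
  intro d hd
  rw [Pi.one_def, ← Finsupp.degree_eq_weight_one]
  exact h d hd

/-- homogeneous of degree 2 and divisible by `X 0 ^ 3` implies zero -/
private lemma stmt17_kill2 {p : MvPolynomial (Fin 4) k} (hp : p.IsHomogeneous 2)
    (h : (X 0 : MvPolynomial (Fin 4) k) ^ 3 ∣ p) : p = 0 := by
  obtain ⟨t, ht⟩ := h
  have ht' : p = X 0 * (X 0 * (X 0 * t)) := by rw [ht]; ring
  suffices h0 : t = 0 by rw [ht, h0, mul_zero]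
  ext d
  have hc : coeff (Finsupp.single 0 1 + (Finsupp.single 0 1 + (Finsupp.single 0 1 + d))) p
      = coeff d t := by rw [ht']; simp [coeff_X_mul]
  rw [coeff_zero, ← hc]
  apply hp.coeff_eq_zero
  simp [stmt17_degree4, Finsupp.single_apply]
  omega

/-- homogeneous of degree 3 divisible by `X 0 ^ 3` with vanishing `x0^3`-coefficient is zero -/
private lemma stmt17_kill3 {p : MvPolynomial (Fin 4) k} (hp : p.IsHomogeneous 3)
    (hc0 : coeff (Finsupp.single 0 3) p = 0)
    (h : (X 0 : MvPolynomial (Fin 4) k) ^ 3 ∣ p) : p = 0 := by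
  obtain ⟨t, ht⟩ := h
  have ht' : p = X 0 * (X 0 * (X 0 * t)) := by rw [ht]; ring
  suffices h0 : t = 0 by rw [ht, h0, mul_zero]
  ext d
  have hc : coeff (Finsupp.single 0 1 + (Finsupp.single 0 1 + (Finsupp.single 0 1 + d))) p
      = coeff d t := by rw [ht']; simp [coeff_X_mul]
  rw [coeff_zero, ← hc]
  rcases eq_or_ne d 0 with rfl | hd0
  · rw [← hc0]
    congr 1
    ext j
    simp [Finsupp.single_apply]
    split <;> rfl
  · apply hp.coeff_eq_zero
    have : d.degree ≠ 0 := fun h => hd0 ((Finsupp.degree_eq_zero_iff d).1 h)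
    rw [stmt17_degree4] at this ⊢
    simp [Finsupp.single_apply]
    omega

end StmtAux

theorem stmt17 (k : Type*) [Field k] [CharZero k]
    (F : MvPolynomial (Fin 4) k)
    (hF : F = X 0 ^ 4 + (X 1 ^ 2 + X 2 ^ 2) ^ 2)
    (u : Fin 4 → MvPolynomial (Fin 4) k) (hu : ∀ j, u j = pderiv j F) :
    (∀ a : Fin 6 → MvPolynomial (Fin 4) k,
      (∀ r, a r ∈ homogeneousSubmodule (Fin 4) k 2) →
      (((-(a 0 * u 1) - a 1 * u 2 - a 2 * u 3 = 0) ∧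
        (a 0 * u 0 - a 3 * u 2 - a 4 * u 3 = 0) ∧
        (a 1 * u 0 + a 3 * u 1 - a 5 * u 3 = 0) ∧
        (a 2 * u 0 + a 4 * u 1 + a 5 * u 2 = 0)) ↔
       ∃ w : MvPolynomial (Fin 4) k, w ∈ homogeneousSubmodule (Fin 4) k 1 ∧
         a = ![0, 0, 0, 0, X 2 * w, -(X 1 * w)])) ∧
    -- the kernel is `4`-dimensional, like `R_1`
    finrank k (homogeneousSubmodule (Fin 4) k 1) = 4 := by
  have hu0 : u 0 = 4 * X 0 ^ 3 := by rw [hu 0, hF]; simp [pderiv_X]; try ring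
  have hu1 : u 1 = 4 * X 1 * (X 1 ^ 2 + X 2 ^ 2) := by rw [hu 1, hF]; simp [pderiv_X]; try ring
  have hu2 : u 2 = 4 * X 2 * (X 1 ^ 2 + X 2 ^ 2) := by rw [hu 2, hF]; simp [pderiv_X]; try ring
  have hu3 : u 3 = 0 := by rw [hu 3, hF]; simp [pderiv_X]
  have h4 : (4 : MvPolynomial (Fin 4) k) ≠ 0 := by norm_num
  have h4X : (4 : MvPolynomial (Fin 4) k) * X 0 ^ 3 ≠ 0 :=
    mul_ne_zero h4 (pow_ne_zero _ (X_ne_zero 0))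
  constructor
  · intro a ha
    constructor
    · rintro ⟨e1, e2, e3, e4⟩
      simp only [hu0, hu1, hu2, hu3] at e1 e2 e3 e4
      -- step 1 : a 3 = 0
      have hnd2 : ¬ (X 0 : MvPolynomial (Fin 4) k) ∣ (4 * X 2 * (X 1 ^ 2 + X 2 ^ 2)) := by
        rintro ⟨d, hd⟩
        have := congrArg (eval (fun i : Fin 4 => if i = 0 then (0:k) else 1)) hd
        simp at this
      have hdvd3 : (X 0 : MvPolynomial (Fin 4) k) ^ 3 ∣ a 3 * (4 * X 2 * (X 1 ^ 2 + X 2 ^ 2)) :=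
        ⟨4 * a 0, by linear_combination -e2⟩
      have ha3 : a 3 = 0 :=
        stmt17_kill2 (ha 3) ((stmt17_primeX 0).pow_dvd_of_dvd_mul_right 3 hnd2 hdvd3)
      -- step 2 : a 0 = 0 and a 1 = 0
      have ha0 : a 0 = 0 := by
        have : a 0 * (4 * X 0 ^ 3) = 0 := by rw [ha3] at e2; linear_combination e2
        exact (mul_eq_zero.1 this).resolve_right h4X
      have ha1 : a 1 = 0 := by
        have : a 1 * (4 * X 0 ^ 3) = 0 := by rw [ha3] at e3; linear_combination e3
        exact (mul_eq_zero.1 this).resolve_right h4X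
      -- step 3 : a 4 * X 1 + a 5 * X 2 = 0 and a 2 = 0
      have hnd4 : ¬ (X 0 : MvPolynomial (Fin 4) k) ∣ (4 * (X 1 ^ 2 + X 2 ^ 2)) := by
        rintro ⟨d, hd⟩
        have := congrArg (eval (fun i : Fin 4 => if i = 0 then (0:k) else 1)) hd
        simp at this
      have hdvds : (X 0 : MvPolynomial (Fin 4) k) ^ 3 ∣
          (a 4 * X 1 + a 5 * X 2) * (4 * (X 1 ^ 2 + X 2 ^ 2)) :=
        ⟨-(4 * a 2), by linear_combination e4⟩
      have hshom : (a 4 * X 1 + a 5 * X 2).IsHomogeneous 3 :=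
        ((ha 4).mul (isHomogeneous_X k 1)).add ((ha 5).mul (isHomogeneous_X k 2))
      have hscoeff : coeff (Finsupp.single 0 3) (a 4 * X 1 + a 5 * X 2) = 0 := by
        simp [coeff_mul_X', Finsupp.single_apply]
      have hs : a 4 * X 1 + a 5 * X 2 = 0 :=
        stmt17_kill3 hshom hscoeff ((stmt17_primeX 0).pow_dvd_of_dvd_mul_right 3 hnd4 hdvds)
      have ha2 : a 2 = 0 := by
        have : a 2 * (4 * X 0 ^ 3) = 0 := by linear_combination e4 - 4 * (X 1^2 + X 2^2) * hs
        exact (mul_eq_zero.1 this).resolve_right h4X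
      -- step 4 : extract w
      have hnd1 : ¬ (X 2 : MvPolynomial (Fin 4) k) ∣ X 1 := by
        rintro ⟨d, hd⟩
        have := congrArg (eval (fun i : Fin 4 => if i = 2 then (0:k) else 1)) hd
        simp at this
      have hX2dvd : (X 2 : MvPolynomial (Fin 4) k) ∣ a 4 * X 1 := ⟨-(a 5), by linear_combination hs⟩
      obtain ⟨w, hw⟩ := ((stmt17_primeX 2).2.2 _ _ hX2dvd).resolve_right hnd1
      have ha5 : a 5 = -(X 1 * w) := by
        have h0 : X 2 * (X 1 * w + a 5) = 0 := by rw [hw] at hs; linear_combination hs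
        have := (mul_eq_zero.1 h0).resolve_left (X_ne_zero 2)
        linear_combination this
      refine ⟨w, ?_, ?_⟩
      · rw [mem_homogeneousSubmodule]
        apply stmt17_isHomog_of
        intro d hd
        by_contra hne
        apply hd
        have hcz : coeff (Finsupp.single 2 1 + d) (a 4) = 0 := by
          apply (ha 4).coeff_eq_zero
          rw [stmt17_degree4] at hne ⊢
          simp [Finsupp.single_apply]
          omega
        rwa [hw, coeff_X_mul] at hcz
      · funext r
        fin_cases r
        exacts [ha0, ha1, ha2, ha3, hw, ha5]
    · rintro ⟨w, hw, rfl⟩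
      have m0 : (![0, 0, 0, 0, X 2 * w, -(X 1 * w)] : Fin 6 → MvPolynomial (Fin 4) k) 0 = 0 := rfl
      have m1 : (![0, 0, 0, 0, X 2 * w, -(X 1 * w)] : Fin 6 → MvPolynomial (Fin 4) k) 1 = 0 := rfl
      have m2 : (![0, 0, 0, 0, X 2 * w, -(X 1 * w)] : Fin 6 → MvPolynomial (Fin 4) k) 2 = 0 := rfl
      have m3 : (![0, 0, 0, 0, X 2 * w, -(X 1 * w)] : Fin 6 → MvPolynomial (Fin 4) k) 3 = 0 := rfl
      have m4 : (![0, 0, 0, 0, X 2 * w, -(X 1 * w)] : Fin 6 → MvPolynomial (Fin 4) k) 4 = X 2 * w := rfl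
      have m5 : (![0, 0, 0, 0, X 2 * w, -(X 1 * w)] : Fin 6 → MvPolynomial (Fin 4) k) 5 = -(X 1 * w) := rfl
      refine ⟨?_, ?_, ?_, ?_⟩ <;>
        simp only [m0, m1, m2, m3, m4, m5, hu0, hu1, hu2, hu3] <;> ring
  · -- dimension count
    have hli : LinearIndependent k (fun i : Fin 4 => (X i : MvPolynomial (Fin 4) k)) := by
      rw [Fintype.linearIndependent_iff]
      intro g hg i
      have := congrArg (coeff (Finsupp.single i 1)) hg
      simpa [coeff_sum, coeff_smul, coeff_X', Finsupp.single_eq_single_iff,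
        Finset.sum_ite_eq] using this
    have hspan : homogeneousSubmodule (Fin 4) k 1
        = Submodule.span k (Set.range fun i : Fin 4 => (X i : MvPolynomial (Fin 4) k)) := by
      apply le_antisymm
      · intro p hp
        rw [mem_homogeneousSubmodule] at hp
        nth_rewrite 1 [p.as_sum]
        apply Submodule.sum_mem
        intro d hd
        have hdeg : d.degree = 1 := by
          rw [Finsupp.degree_eq_weight_one]
          exact hp (mem_support_iff.1 hd)
        have : ∃ i, d = Finsupp.single i 1 := by
          rw [stmt17_degree4] at hdeg
          have : (d 0 = 1 ∧ d 1 = 0 ∧ d 2 = 0 ∧ d 3 = 0) ∨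
                 (d 1 = 1 ∧ d 0 = 0 ∧ d 2 = 0 ∧ d 3 = 0) ∨
                 (d 2 = 1 ∧ d 0 = 0 ∧ d 1 = 0 ∧ d 3 = 0) ∨
                 (d 3 = 1 ∧ d 0 = 0 ∧ d 1 = 0 ∧ d 2 = 0) := by omega
          rcases this with h | h | h | h
          exacts [⟨0, by ext j; fin_cases j <;> simp [Finsupp.single_apply, h.1, h.2.1, h.2.2.1, h.2.2.2]⟩,
                  ⟨1, by ext j; fin_cases j <;> simp [Finsupp.single_apply, h.1, h.2.1, h.2.2.1, h.2.2.2]⟩,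
                  ⟨2, by ext j; fin_cases j <;> simp [Finsupp.single_apply, h.1, h.2.1, h.2.2.1, h.2.2.2]⟩,
                  ⟨3, by ext j; fin_cases j <;> simp [Finsupp.single_apply, h.1, h.2.1, h.2.2.1, h.2.2.2]⟩]
        obtain ⟨i, rfl⟩ := this
        have : (monomial (Finsupp.single i 1)) (coeff (Finsupp.single i 1) p)
            = coeff (Finsupp.single i 1) p • X i := by
          rw [smul_eq_C_mul, X, C_mul_monomial, mul_one]
        rw [this]
        exact Submodule.smul_mem _ _ (Submodule.subset_span ⟨i, rfl⟩)
      · rw [Submodule.span_le]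
        rintro _ ⟨i, rfl⟩
        exact isHomogeneous_X k i
    rw [hspan, finrank_span_eq_card hli, Fintype.card_fin]
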